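/- With the same operators A, B, C, D as built from the free fermion six vertex weights, the following relations hold for any x, z: (i) B(z, √(z/x)) D(x, √(x/z)) + D(z, √(z/x)) B(x, √(x/z)) = 0; (ii) D(z, √(z/x)) C(x, √(x/z)) = C(z, √(z/x)) D(x, √(x/z)); (iii) B(x, t) B(z, √(z/x)) = 0 for any t. Here the notation means that the r-parameter of each operator is set so that r^2 equals the ratio of its x-parameter to the other spectral parameter. -/

import Mathlib

noncomputable section

/-- The free fermion six vertex weights `W(i₁,j₁;i₂,j₂ | x;y;r;s)`, parameterized
by `r2 = r²` (the parameter `r` enters the weights only through `r²`, so for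
`r = √(x/z)` no branch choice matters).  Weights are zero unless
`i₁ + j₁ = i₂ + j₂`. -/
def W6sq (x y r2 s : ℂ) : Bool → Bool → Bool → Bool → ℂ
  | false, false, false, false => 1
  | true, true, true, true => (r2⁻¹ * x - y) / ((s ^ 2)⁻¹ * y - x)
  | true, false, true, false => ((s ^ 2)⁻¹ * y - r2⁻¹ * x) / ((s ^ 2)⁻¹ * y - x)
  | false, true, false, true => (y - x) / ((s ^ 2)⁻¹ * y - x)
  | true, false, false, true => x * (r2⁻¹ - 1) / ((s ^ 2)⁻¹ * y - x)
  | false, true, true, false => y * ((s ^ 2)⁻¹ - 1) / ((s ^ 2)⁻¹ * y - x)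
  | _, _, _, _ => 0

/-- The row operator (with spectral parameter `x`, spin parameter squared `r2`)
on the `n`-fold tensor product `V^{(1)} ⊗ ⋯ ⊗ V^{(n)}` (identified with
`(Fin n → Bool) → ℂ`), with left horizontal boundary `a` and right boundary `b`:
`A = rowOp … true true`, `B = rowOp … false true`,
`C = rowOp … true false`, `D = rowOp … false false`.  This reproduces the
recursive coproduct extension of the single-site operators
`A e_i = W(i,1;i,1) e_i`, `B e_i = W(i,0;i-1,1) e_{i-1}`,
`C e_i = W(i,1;i+1,0) e_{i+1}`, `D e_i = W(i,0;i,0) e_i`. -/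
def rowOpSq (n : ℕ) (y s : Fin n → ℂ) (x r2 : ℂ) (a b : Bool) :
    Matrix (Fin n → Bool) (Fin n → Bool) ℂ :=
  Matrix.of fun mOut mIn =>
    ∑ h : Fin (n + 1) → Bool,
      if h 0 = a ∧ h (Fin.last n) = b then
        ∏ c : Fin n, W6sq x (y c) r2 (s c) (mIn c) (h c.castSucc) (mOut c) (h c.succ)
      else 0

open Matrix

private lemma chainSum {H : Type*} [Fintype H] [DecidableEq H] :
    ∀ (n : ℕ) (w : Fin n → Matrix H H ℂ) (a b : H),
    (∑ h : Fin (n + 1) → H,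
      if h 0 = a ∧ h (Fin.last n) = b then
        ∏ c : Fin n, w c (h c.castSucc) (h c.succ) else 0)
      = (List.ofFn w).prod a b
  | 0, w, a, b => by
      rw [show (List.ofFn w) = [] by simp, List.prod_nil]
      rw [← Equiv.sum_comp (Equiv.funUnique (Fin 1) H).symm
        (fun h : Fin 1 → H => if h 0 = a ∧ h (Fin.last 0) = b then
          (∏ c : Fin 0, w c (h c.castSucc) (h c.succ)) else 0)]
      have key : ∀ v : H, ((Equiv.funUnique (Fin 1) H).symm v : Fin 1 → H) 0 = v ∧
          ((Equiv.funUnique (Fin 1) H).symm v : Fin 1 → H) (Fin.last 0) = v := by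
        intro v; exact ⟨rfl, rfl⟩
      have : ∀ v : H, (if ((Equiv.funUnique (Fin 1) H).symm v : Fin 1 → H) 0 = a ∧
          ((Equiv.funUnique (Fin 1) H).symm v : Fin 1 → H) (Fin.last 0) = b then
          (∏ c : Fin 0, w c ((((Equiv.funUnique (Fin 1) H).symm v) : Fin 1 → H) c.castSucc)
            ((((Equiv.funUnique (Fin 1) H).symm v) : Fin 1 → H) c.succ)) else 0)
          = if v = a then (if a = b then (1:ℂ) else 0) else 0 := by
        intro v
        rw [(key v).1, (key v).2]
        by_cases h1 : v = a
        · subst h1; by_cases h2 : v = b <;> simp [h2]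
        · simp [h1]
      rw [Finset.sum_congr rfl (fun v _ => this v)]
      rw [Finset.sum_ite_eq' Finset.univ a (fun _ => if a = b then (1:ℂ) else 0)]
      simp [Matrix.one_apply]
  | (n+1), w, a, b => by
      rw [← Equiv.sum_comp (Fin.consEquiv (fun _ : Fin (n+2) => H))
        (fun h : Fin (n+2) → H => if h 0 = a ∧ h (Fin.last (n+1)) = b then
          ∏ c : Fin (n+1), w c (h c.castSucc) (h c.succ) else 0)]
      have step : ∀ (k : H) (g : Fin (n+1) → H),
          (fun h : Fin (n+2) → H => if h 0 = a ∧ h (Fin.last (n+1)) = b then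
            ∏ c : Fin (n+1), w c (h c.castSucc) (h c.succ) else 0)
            ((Fin.consEquiv (fun _ : Fin (n+2) => H)) (k, g))
          = if k = a ∧ g (Fin.last n) = b then
              w 0 k (g 0) * ∏ c : Fin n, w c.succ (g c.castSucc) (g c.succ) else 0 := by
        intro k g
        simp only [Fin.consEquiv_apply]
        have h0 : (Fin.cons k g : ∀ _ : Fin (n+2), H) 0 = k := rfl
        have hl : (Fin.cons k g : ∀ _ : Fin (n+2), H) (Fin.last (n+1)) = g (Fin.last n) := by
          rw [show (Fin.last (n+1)) = (Fin.last n).succ from rfl, Fin.cons_succ]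
        rw [h0, hl]
        refine if_congr Iff.rfl ?_ rfl
        rw [Fin.prod_univ_succ]
        refine congrArg₂ (· * ·) ?_ ?_
        · have e1 : (Fin.cons k g : ∀ _ : Fin (n+2), H) ((0 : Fin (n+1)).castSucc) = k := rfl
          have e2 : (Fin.cons k g : ∀ _ : Fin (n+2), H) ((0 : Fin (n+1)).succ) = g 0 := by
            rw [Fin.cons_succ]
          rw [e1, e2]
        · refine Finset.prod_congr rfl fun c _ => ?_
          rw [← Fin.succ_castSucc]
          simp only [Fin.cons_succ]
      rw [Fintype.sum_prod_type]
      rw [Finset.sum_congr rfl (fun k _ => Finset.sum_congr rfl (fun g _ => step k g))]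
      rw [Finset.sum_comm]
      have inner : ∀ g : Fin (n+1) → H,
          (∑ k : H, if k = a ∧ g (Fin.last n) = b then
            w 0 k (g 0) * ∏ c : Fin n, w c.succ (g c.castSucc) (g c.succ) else 0)
          = ∑ m : H, w 0 a m * (if g 0 = m ∧ g (Fin.last n) = b then
              ∏ c : Fin n, w c.succ (g c.castSucc) (g c.succ) else 0) := by
        intro g
        rw [Finset.sum_eq_single a (fun k _ hk => by simp [hk]) (by simp)]
        rw [Finset.sum_eq_single (g 0) (fun m _ hm => by simp [Ne.symm hm]) (by simp)]
        by_cases hb : g (Fin.last n) = b <;> simp [hb, mul_ite]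
      rw [Finset.sum_congr rfl (fun g _ => inner g)]
      rw [Finset.sum_comm]
      have ihm : ∀ m : H,
          (∑ g : Fin (n+1) → H, if g 0 = m ∧ g (Fin.last n) = b then
            ∏ c : Fin n, w c.succ (g c.castSucc) (g c.succ) else 0)
          = (List.ofFn (fun c : Fin n => w c.succ)).prod m b :=
        fun m => chainSum n (fun c => w c.succ) m b
      simp_rw [← Finset.mul_sum]
      rw [Finset.sum_congr rfl (fun m _ => by rw [ihm m])]
      rw [show List.ofFn w = w 0 :: List.ofFn (fun c : Fin n => w c.succ) from
        by rw [List.ofFn_succ]]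
      rw [List.prod_cons, Matrix.mul_apply]

open Kronecker

/-- weights with the inverse parameters as direct arguments -/
private def Wp (x y ri w : ℂ) : Bool → Bool → Bool → Bool → ℂ
  | false, false, false, false => 1
  | true, true, true, true => (ri * x - y) / (w * y - x)
  | true, false, true, false => (w * y - ri * x) / (w * y - x)
  | false, true, false, true => (y - x) / (w * y - x)
  | true, false, false, true => x * (ri - 1) / (w * y - x)
  | false, true, true, false => y * (w - 1) / (w * y - x)
  | _, _, _, _ => 0

private lemma W6sq_eq_Wp (x y r2 s : ℂ) (i j k l : Bool) :
    W6sq x y r2 s i j k l = Wp x y r2⁻¹ ((s ^ 2)⁻¹) i j k l := by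
  cases i <;> cases j <;> cases k <;> cases l <;> rfl

private def Lsite (x y ri w : ℂ) (i1 i2 : Bool) : Matrix Bool Bool ℂ :=
  Matrix.of fun j1 j2 => Wp x y ri w i1 j1 i2 j2

private lemma rowOpSq_apply (n : ℕ) (y s : Fin n → ℂ) (x r2 : ℂ) (a b : Bool)
    (mO mI : Fin n → Bool) :
    rowOpSq n y s x r2 a b mO mI
      = (List.ofFn fun c => Lsite x (y c) r2⁻¹ ((s c ^ 2)⁻¹) (mI c) (mO c)).prod a b := by
  rw [show rowOpSq n y s x r2 a b mO mI = ∑ h : Fin (n + 1) → Bool,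
      if h 0 = a ∧ h (Fin.last n) = b then
        ∏ c : Fin n, W6sq x (y c) r2 (s c) (mI c) (h c.castSucc) (mO c) (h c.succ)
      else 0 from rfl]
  rw [← chainSum n (fun c => Lsite x (y c) r2⁻¹ ((s c ^ 2)⁻¹) (mI c) (mO c)) a b]
  refine Finset.sum_congr rfl fun h _ => ?_
  refine if_congr Iff.rfl (Finset.prod_congr rfl fun c _ => ?_) rfl
  rw [W6sq_eq_Wp]
  rfl

private lemma sum_prod_ofFn {R : Type*} [Semiring R] {β : Type*} [Fintype β]
    [DecidableEq β] :
    ∀ (n : ℕ) (K : Fin n → β → R),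
    ∑ f : Fin n → β, (List.ofFn fun c => K c (f c)).prod
      = (List.ofFn fun c => ∑ m : β, K c m).prod
  | 0, K => by simp
  | (n+1), K => by
      rw [← Equiv.sum_comp (Fin.consEquiv (fun _ : Fin (n+1) => β))
        (fun f : Fin (n+1) → β => (List.ofFn fun c => K c (f c)).prod)]
      rw [Fintype.sum_prod_type]
      have step : ∀ (m : β) (g : Fin n → β),
          (List.ofFn fun c : Fin (n+1) =>
            K c (((Fin.consEquiv (fun _ : Fin (n+1) => β)) (m, g)) c)).prod
          = K 0 m * (List.ofFn fun c : Fin n => K c.succ (g c)).prod := by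
        intro m g
        rw [List.ofFn_succ, List.prod_cons]
        simp only [Fin.consEquiv_apply, Fin.cons_zero, Fin.cons_succ]
      rw [Finset.sum_congr rfl (fun m _ => Finset.sum_congr rfl (fun g _ => step m g))]
      have ih := sum_prod_ofFn n (fun c => K c.succ)
      calc ∑ m : β, ∑ g : Fin n → β,
              K 0 m * (List.ofFn fun c : Fin n => K c.succ (g c)).prod
          = ∑ m : β, K 0 m * ∑ g : Fin n → β,
              (List.ofFn fun c : Fin n => K c.succ (g c)).prod := by
            refine Finset.sum_congr rfl fun m _ => ?_; rw [Finset.mul_sum]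
        _ = ∑ m : β, K 0 m * (List.ofFn fun c : Fin n => ∑ m' : β, K c.succ m').prod := by
            exact Finset.sum_congr rfl (fun m _ => by rw [ih])
        _ = (∑ m : β, K 0 m) * (List.ofFn fun c : Fin n => ∑ m' : β, K c.succ m').prod := by
            rw [Finset.sum_mul]
        _ = (List.ofFn fun c : Fin (n+1) => ∑ m : β, K c m).prod := by
            rw [List.ofFn_succ, List.prod_cons]

private lemma prod_kronecker :
    ∀ (n : ℕ) (X Y : Fin n → Matrix Bool Bool ℂ),
    (List.ofFn fun c => X c ⊗ₖ Y c).prod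
      = (List.ofFn X).prod ⊗ₖ (List.ofFn Y).prod
  | 0, X, Y => by simp [Matrix.one_kronecker_one]
  | (n+1), X, Y => by
      rw [List.ofFn_succ, List.ofFn_succ (f := X), List.ofFn_succ (f := Y)]
      rw [List.prod_cons, List.prod_cons, List.prod_cons]
      rw [prod_kronecker n (fun c => X c.succ) (fun c => Y c.succ)]
      rw [← Matrix.mul_kronecker_mul]

/-- the local two-row transfer matrix -/
private def Nsite (xL rLi xR rRi yy w : ℂ) (mi mo : Bool) :
    Matrix (Bool × Bool) (Bool × Bool) ℂ :=
  Matrix.of fun k k' => ∑ m : Bool, Wp xL yy rLi w m k.1 mo k'.1 * Wp xR yy rRi w mi k.2 m k'.2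

private lemma mul_rowOpSq_apply (n : ℕ) (y s : Fin n → ℂ) (xL rL xR rR : ℂ)
    (a b c d : Bool) (mO mI : Fin n → Bool) :
    (rowOpSq n y s xL rL a b * rowOpSq n y s xR rR c d) mO mI
      = (List.ofFn fun cc =>
          Nsite xL rL⁻¹ xR rR⁻¹ (y cc) ((s cc ^ 2)⁻¹) (mI cc) (mO cc)).prod (a, c) (b, d) := by
  rw [Matrix.mul_apply]
  have e1 : ∀ mM : Fin n → Bool,
      rowOpSq n y s xL rL a b mO mM * rowOpSq n y s xR rR c d mM mI
      = (List.ofFn fun cc =>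
          (Lsite xL (y cc) rL⁻¹ ((s cc ^ 2)⁻¹) (mM cc) (mO cc)) ⊗ₖ
          (Lsite xR (y cc) rR⁻¹ ((s cc ^ 2)⁻¹) (mI cc) (mM cc))).prod (a, c) (b, d) := by
    intro mM
    rw [rowOpSq_apply, rowOpSq_apply, prod_kronecker]
    rfl
  rw [Finset.sum_congr rfl (fun mM _ => e1 mM)]
  have e2 := sum_prod_ofFn (R := Matrix (Bool × Bool) (Bool × Bool) ℂ) n
    (fun cc m => (Lsite xL (y cc) rL⁻¹ ((s cc ^ 2)⁻¹) m (mO cc)) ⊗ₖ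
      (Lsite xR (y cc) rR⁻¹ ((s cc ^ 2)⁻¹) (mI cc) m))
  calc (∑ mM : Fin n → Bool, (List.ofFn fun cc =>
          (Lsite xL (y cc) rL⁻¹ ((s cc ^ 2)⁻¹) (mM cc) (mO cc)) ⊗ₖ
          (Lsite xR (y cc) rR⁻¹ ((s cc ^ 2)⁻¹) (mI cc) (mM cc))).prod (a, c) (b, d))
      = (∑ mM : Fin n → Bool, (List.ofFn fun cc =>
          (Lsite xL (y cc) rL⁻¹ ((s cc ^ 2)⁻¹) (mM cc) (mO cc)) ⊗ₖ
          (Lsite xR (y cc) rR⁻¹ ((s cc ^ 2)⁻¹) (mI cc) (mM cc))).prod) (a, c) (b, d) := by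
        rw [Matrix.sum_apply]
    _ = ((List.ofFn fun cc => ∑ m : Bool,
          (Lsite xL (y cc) rL⁻¹ ((s cc ^ 2)⁻¹) m (mO cc)) ⊗ₖ
          (Lsite xR (y cc) rR⁻¹ ((s cc ^ 2)⁻¹) (mI cc) m)).prod) (a, c) (b, d) := by
        rw [e2]
    _ = (List.ofFn fun cc =>
          Nsite xL rL⁻¹ xR rR⁻¹ (y cc) ((s cc ^ 2)⁻¹) (mI cc) (mO cc)).prod (a, c) (b, d) := by
        refine congrFun (congrFun (congrArg _ (congrArg _ (funext fun cc => ?_))) _) _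
        ext ⟨h, g⟩ ⟨h', g'⟩
        simp [Nsite, Lsite, Matrix.sum_apply, Matrix.kroneckerMap_apply]

private def v1 : Bool × Bool → ℂ := fun k =>
  if k = (false, true) ∨ k = (true, false) then 1 else 0

private def uvec : Bool × Bool → ℂ := fun k =>
  if k = (false, true) then 1 else if k = (true, false) then -1 else 0

private def effv : Bool × Bool → ℂ := fun k => if k = (false, false) then 1 else 0

private def pvec (x z t2 : ℂ) : Bool × Bool → ℂ := fun k =>
  if k = (false, true) then t2 * (x - z)
  else if k = (true, false) then x * (1 - t2) else 0

section SiteLemmas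

variable (x z t2 yy w : ℂ)

set_option maxHeartbeats 1600000 in
private lemma siteA_mulVec (hx : x ≠ 0) (hz : z ≠ 0)
    (h1 : w * yy - x ≠ 0) (h2 : w * yy - z ≠ 0) (mo mi : Bool) :
    ∃ lam : ℂ, (Nsite z (z/x)⁻¹ x (x/z)⁻¹ yy w mi mo).mulVec v1 = lam • v1 := by
  have h1' : yy * w - x ≠ 0 := by rwa [mul_comm]
  have h2' : yy * w - z ≠ 0 := by rwa [mul_comm]
  cases mo <;> cases mi
  · refine ⟨-((z - yy) / (w * yy - z)), ?_⟩
    funext k; obtain ⟨h, g⟩ := k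
    simp only [Matrix.mulVec, dotProduct, Fintype.sum_prod_type, Fintype.sum_bool,
      Nsite, Wp, inv_div, v1, Matrix.of_apply, Pi.smul_apply, smul_eq_mul]
    cases h <;> cases g <;> norm_num <;> field_simp <;> ring
  · refine ⟨0, ?_⟩
    funext k; obtain ⟨h, g⟩ := k
    simp only [Matrix.mulVec, dotProduct, Fintype.sum_prod_type, Fintype.sum_bool,
      Nsite, Wp, inv_div, v1, Matrix.of_apply, Pi.smul_apply, smul_eq_mul]
    cases h <;> cases g <;> norm_num <;> field_simp <;> ring
  · refine ⟨0, ?_⟩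
    funext k; obtain ⟨h, g⟩ := k
    simp only [Matrix.mulVec, dotProduct, Fintype.sum_prod_type, Fintype.sum_bool,
      Nsite, Wp, inv_div, v1, Matrix.of_apply, Pi.smul_apply, smul_eq_mul]
    cases h <;> cases g <;> norm_num <;> field_simp <;> ring
  · refine ⟨(z - yy) / (w * yy - z), ?_⟩
    funext k; obtain ⟨h, g⟩ := k
    simp only [Matrix.mulVec, dotProduct, Fintype.sum_prod_type, Fintype.sum_bool,
      Nsite, Wp, inv_div, v1, Matrix.of_apply, Pi.smul_apply, smul_eq_mul]
    cases h <;> cases g <;> norm_num <;> field_simp <;> ring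

set_option maxHeartbeats 1600000 in
private lemma siteA_vecMul (hx : x ≠ 0) (hz : z ≠ 0)
    (h1 : w * yy - x ≠ 0) (h2 : w * yy - z ≠ 0) (mo mi : Bool) :
    ∃ mu : ℂ, Matrix.vecMul uvec (Nsite z (z/x)⁻¹ x (x/z)⁻¹ yy w mi mo) = mu • uvec := by
  have h1' : yy * w - x ≠ 0 := by rwa [mul_comm]
  have h2' : yy * w - z ≠ 0 := by rwa [mul_comm]
  cases mo <;> cases mi
  · refine ⟨-((x - yy) / (w * yy - x)), ?_⟩
    funext k; obtain ⟨h, g⟩ := k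
    simp only [Matrix.vecMul, dotProduct, Fintype.sum_prod_type, Fintype.sum_bool,
      Nsite, Wp, inv_div, uvec, Matrix.of_apply, Pi.smul_apply, smul_eq_mul]
    cases h <;> cases g <;> norm_num <;> field_simp <;> ring
  · refine ⟨0, ?_⟩
    funext k; obtain ⟨h, g⟩ := k
    simp only [Matrix.vecMul, dotProduct, Fintype.sum_prod_type, Fintype.sum_bool,
      Nsite, Wp, inv_div, uvec, Matrix.of_apply, Pi.smul_apply, smul_eq_mul]
    cases h <;> cases g <;> norm_num <;> field_simp <;> ring
  · refine ⟨0, ?_⟩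
    funext k; obtain ⟨h, g⟩ := k
    simp only [Matrix.vecMul, dotProduct, Fintype.sum_prod_type, Fintype.sum_bool,
      Nsite, Wp, inv_div, uvec, Matrix.of_apply, Pi.smul_apply, smul_eq_mul]
    cases h <;> cases g <;> norm_num <;> field_simp <;> ring
  · refine ⟨(x - yy) / (w * yy - x), ?_⟩
    funext k; obtain ⟨h, g⟩ := k
    simp only [Matrix.vecMul, dotProduct, Fintype.sum_prod_type, Fintype.sum_bool,
      Nsite, Wp, inv_div, uvec, Matrix.of_apply, Pi.smul_apply, smul_eq_mul]
    cases h <;> cases g <;> norm_num <;> field_simp <;> ring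

set_option maxHeartbeats 1600000 in
private lemma siteB_eff (hx : x ≠ 0) (hz : z ≠ 0) (ht2 : t2 ≠ 0)
    (h1 : w * yy - x ≠ 0) (h2 : w * yy - z ≠ 0) (mo mi : Bool) :
    ∃ a b : ℂ, Matrix.vecMul effv (Nsite x t2⁻¹ z (z/x)⁻¹ yy w mi mo)
      = a • effv + b • pvec x z t2 := by
  cases mo <;> cases mi
  · refine ⟨1, 0, ?_⟩
    funext k; obtain ⟨h, g⟩ := k
    simp only [Matrix.vecMul, dotProduct, Fintype.sum_prod_type, Fintype.sum_bool,
      Nsite, Wp, inv_div, effv, pvec, Matrix.of_apply, Pi.smul_apply, Pi.add_apply, smul_eq_mul]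
    cases h <;> cases g <;> norm_num <;> field_simp <;> ring
  · refine ⟨0, 1 / (t2 * (w * yy - z)), ?_⟩
    funext k; obtain ⟨h, g⟩ := k
    simp only [Matrix.vecMul, dotProduct, Fintype.sum_prod_type, Fintype.sum_bool,
      Nsite, Wp, inv_div, effv, pvec, Matrix.of_apply, Pi.smul_apply, Pi.add_apply, smul_eq_mul]
    cases h <;> cases g <;> norm_num <;> field_simp <;> ring
  · refine ⟨0, 0, ?_⟩
    funext k; obtain ⟨h, g⟩ := k
    simp only [Matrix.vecMul, dotProduct, Fintype.sum_prod_type, Fintype.sum_bool,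
      Nsite, Wp, inv_div, effv, pvec, Matrix.of_apply, Pi.smul_apply, Pi.add_apply, smul_eq_mul]
    cases h <;> cases g <;> norm_num <;> field_simp <;> ring
  · refine ⟨-(x - t2 * (w * yy)) / (t2 * (w * yy - z)), 0, ?_⟩
    funext k; obtain ⟨h, g⟩ := k
    simp only [Matrix.vecMul, dotProduct, Fintype.sum_prod_type, Fintype.sum_bool,
      Nsite, Wp, inv_div, effv, pvec, Matrix.of_apply, Pi.smul_apply, Pi.add_apply, smul_eq_mul]
    cases h <;> cases g <;> norm_num <;> field_simp <;> ring

set_option maxHeartbeats 1600000 in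
private lemma siteB_p (hx : x ≠ 0) (hz : z ≠ 0) (ht2 : t2 ≠ 0)
    (h1 : w * yy - x ≠ 0) (h2 : w * yy - z ≠ 0) (mo mi : Bool) :
    ∃ a b : ℂ, Matrix.vecMul (pvec x z t2) (Nsite x t2⁻¹ z (z/x)⁻¹ yy w mi mo)
      = a • effv + b • pvec x z t2 := by
  have h1' : yy * w - x ≠ 0 := by rwa [mul_comm]
  have h2' : yy * w - z ≠ 0 := by rwa [mul_comm]
  cases mo <;> cases mi
  · refine ⟨0, -(z - yy) / (w * yy - z), ?_⟩
    funext k; obtain ⟨h, g⟩ := k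
    simp only [Matrix.vecMul, dotProduct, Fintype.sum_prod_type, Fintype.sum_bool,
      Nsite, Wp, inv_div, effv, pvec, Matrix.of_apply, Pi.smul_apply, Pi.add_apply, smul_eq_mul]
    cases h <;> cases g <;> norm_num <;> field_simp <;> ring
  · refine ⟨0, 0, ?_⟩
    funext k; obtain ⟨h, g⟩ := k
    simp only [Matrix.vecMul, dotProduct, Fintype.sum_prod_type, Fintype.sum_bool,
      Nsite, Wp, inv_div, effv, pvec, Matrix.of_apply, Pi.smul_apply, Pi.add_apply, smul_eq_mul]
    cases h <;> cases g <;> norm_num <;> field_simp <;> ring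
  · refine ⟨(w * yy - yy) * (x - t2 * z) / (w * yy - z), 0, ?_⟩
    funext k; obtain ⟨h, g⟩ := k
    simp only [Matrix.vecMul, dotProduct, Fintype.sum_prod_type, Fintype.sum_bool,
      Nsite, Wp, inv_div, effv, pvec, Matrix.of_apply, Pi.smul_apply, Pi.add_apply, smul_eq_mul]
    cases h <;> cases g <;> norm_num <;> field_simp <;> ring
  · refine ⟨0, (x - t2 * yy) / (t2 * (w * yy - z)), ?_⟩
    funext k; obtain ⟨h, g⟩ := k
    simp only [Matrix.vecMul, dotProduct, Fintype.sum_prod_type, Fintype.sum_bool,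
      Nsite, Wp, inv_div, effv, pvec, Matrix.of_apply, Pi.smul_apply, Pi.add_apply, smul_eq_mul]
    cases h <;> cases g <;> norm_num <;> field_simp <;> ring

end SiteLemmas

private lemma listEig {K : Type*} [Fintype K] [DecidableEq K] (v : K → ℂ) :
    ∀ (L : List (Matrix K K ℂ)), (∀ M ∈ L, ∃ lam : ℂ, M.mulVec v = lam • v) →
    ∃ lam : ℂ, L.prod.mulVec v = lam • v
  | [], _ => ⟨1, by simp [Matrix.one_mulVec]⟩
  | (M :: L), h => by
      obtain ⟨l2, h2⟩ := listEig v L (fun N hN => h N (List.mem_cons_of_mem M hN))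
      obtain ⟨l1, h1⟩ := h M (List.mem_cons_self)
      refine ⟨l1 * l2, ?_⟩
      rw [List.prod_cons, ← Matrix.mulVec_mulVec, h2]
      rw [show M.mulVec (l2 • v) = l2 • M.mulVec v from M.mulVec_smul l2 v]
      rw [h1, smul_smul, mul_comm]

private lemma listEig' {K : Type*} [Fintype K] [DecidableEq K] (v : K → ℂ) :
    ∀ (L : List (Matrix K K ℂ)), (∀ M ∈ L, ∃ lam : ℂ, Matrix.vecMul v M = lam • v) →
    ∃ lam : ℂ, Matrix.vecMul v L.prod = lam • v
  | [], _ => ⟨1, by simp [Matrix.vecMul_one]⟩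
  | (M :: L), h => by
      obtain ⟨l1, h1⟩ := h M (List.mem_cons_self)
      obtain ⟨l2, h2⟩ := listEig' v L (fun N hN => h N (List.mem_cons_of_mem M hN))
      refine ⟨l1 * l2, ?_⟩
      rw [List.prod_cons, ← Matrix.vecMul_vecMul, h1]
      rw [show Matrix.vecMul (l1 • v) L.prod = l1 • Matrix.vecMul v L.prod from
        Matrix.smul_vecMul l1 v L.prod]
      rw [h2, smul_smul]

private lemma listSpan (x z t2 : ℂ) :
    ∀ (L : List (Matrix (Bool × Bool) (Bool × Bool) ℂ)),
    (∀ M ∈ L, (∃ a b : ℂ, Matrix.vecMul effv M = a • effv + b • pvec x z t2) ∧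
      (∃ a b : ℂ, Matrix.vecMul (pvec x z t2) M = a • effv + b • pvec x z t2)) →
    (∃ a b : ℂ, Matrix.vecMul effv L.prod = a • effv + b • pvec x z t2) ∧
    (∃ a b : ℂ, Matrix.vecMul (pvec x z t2) L.prod = a • effv + b • pvec x z t2)
  | [], _ => ⟨⟨1, 0, by simp [Matrix.vecMul_one]⟩, ⟨0, 1, by simp [Matrix.vecMul_one]⟩⟩
  | (M :: L), h => by
      obtain ⟨⟨ae, be, he⟩, ⟨ap, bp, hp⟩⟩ :=
        listSpan x z t2 L (fun N hN => h N (List.mem_cons_of_mem M hN))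
      obtain ⟨⟨a1, b1, h1⟩, ⟨a2, b2, h2⟩⟩ := h M (List.mem_cons_self)
      constructor
      · refine ⟨a1 * ae + b1 * ap, a1 * be + b1 * bp, ?_⟩
        rw [List.prod_cons, ← Matrix.vecMul_vecMul, h1, Matrix.add_vecMul,
          Matrix.smul_vecMul, Matrix.smul_vecMul, he, hp]
        module
      · refine ⟨a2 * ae + b2 * ap, a2 * be + b2 * bp, ?_⟩
        rw [List.prod_cons, ← Matrix.vecMul_vecMul, h2, Matrix.add_vecMul,
          Matrix.smul_vecMul, Matrix.smul_vecMul, he, hp]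
        module

/-- Simplified relations at special parameter values `r = √(z/x)`, `r = √(x/z)`
(entering only through `r² = z/x` resp. `x/z`):
(i)  `B(z,√(z/x)) D(x,√(x/z)) + D(z,√(z/x)) B(x,√(x/z)) = 0`;
(ii) `D(z,√(z/x)) C(x,√(x/z)) = C(z,√(z/x)) D(x,√(x/z))`;
(iii) `B(x,t) B(z,√(z/x)) = 0` for any `t`. -/
theorem special_parameter_relations (n : ℕ) (y s : Fin n → ℂ) (x z t : ℂ)
    (hx : x ≠ 0) (hz : z ≠ 0) (ht : t ≠ 0)
    (hs : ∀ c, s c ≠ 0)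
    (hd1 : ∀ c, (s c ^ 2)⁻¹ * y c - x ≠ 0)
    (hd2 : ∀ c, (s c ^ 2)⁻¹ * y c - z ≠ 0) :
    (rowOpSq n y s z (z / x) false true * rowOpSq n y s x (x / z) false false +
        rowOpSq n y s z (z / x) false false * rowOpSq n y s x (x / z) false true = 0) ∧
      (rowOpSq n y s z (z / x) false false * rowOpSq n y s x (x / z) true false =
        rowOpSq n y s z (z / x) true false * rowOpSq n y s x (x / z) false false) ∧
      rowOpSq n y s x (t ^ 2) false true * rowOpSq n y s z (z / x) false true = 0 := by
  have ht2 : t ^ 2 ≠ 0 := pow_ne_zero 2 ht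
  refine ⟨?_, ?_, ?_⟩
  · ext mO mI
    rw [Matrix.add_apply, Matrix.zero_apply]
    rw [mul_rowOpSq_apply, mul_rowOpSq_apply]
    set Lst := List.ofFn fun cc =>
      Nsite z (z/x)⁻¹ x (x/z)⁻¹ (y cc) ((s cc ^ 2)⁻¹) (mI cc) (mO cc) with hLst
    obtain ⟨lam, hl⟩ := listEig v1 Lst (by
      intro M hM
      rw [hLst, List.mem_ofFn] at hM
      obtain ⟨cc, rfl⟩ := hM
      exact siteA_mulVec x z (y cc) ((s cc ^ 2)⁻¹) hx hz (hd1 cc) (hd2 cc) (mO cc) (mI cc))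
    have key := congrFun hl (false, false)
    simp only [Matrix.mulVec, dotProduct, Fintype.sum_prod_type, Fintype.sum_bool,
      v1, Pi.smul_apply, smul_eq_mul] at key
    norm_num at key ⊢
    linear_combination key
  · ext mO mI
    rw [mul_rowOpSq_apply, mul_rowOpSq_apply]
    set Lst := List.ofFn fun cc =>
      Nsite z (z/x)⁻¹ x (x/z)⁻¹ (y cc) ((s cc ^ 2)⁻¹) (mI cc) (mO cc) with hLst
    obtain ⟨mu, hu⟩ := listEig' uvec Lst (by
      intro M hM
      rw [hLst, List.mem_ofFn] at hM
      obtain ⟨cc, rfl⟩ := hM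
      exact siteA_vecMul x z (y cc) ((s cc ^ 2)⁻¹) hx hz (hd1 cc) (hd2 cc) (mO cc) (mI cc))
    have key := congrFun hu (false, false)
    simp only [Matrix.vecMul, dotProduct, Fintype.sum_prod_type, Fintype.sum_bool,
      uvec, Pi.smul_apply, smul_eq_mul] at key
    norm_num at key ⊢
    linear_combination key
  · ext mO mI
    rw [Matrix.zero_apply, mul_rowOpSq_apply]
    set Lst := List.ofFn fun cc =>
      Nsite x (t ^ 2)⁻¹ z (z/x)⁻¹ (y cc) ((s cc ^ 2)⁻¹) (mI cc) (mO cc) with hLst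
    obtain ⟨⟨a, b, hab⟩, -⟩ := listSpan x z (t ^ 2) Lst (by
      intro M hM
      rw [hLst, List.mem_ofFn] at hM
      obtain ⟨cc, rfl⟩ := hM
      exact ⟨siteB_eff x z (t ^ 2) (y cc) ((s cc ^ 2)⁻¹) hx hz ht2 (hd1 cc) (hd2 cc)
          (mO cc) (mI cc),
        siteB_p x z (t ^ 2) (y cc) ((s cc ^ 2)⁻¹) hx hz ht2 (hd1 cc) (hd2 cc)
          (mO cc) (mI cc)⟩)
    have key := congrFun hab (true, true)
    simp only [Matrix.vecMul, dotProduct, Fintype.sum_prod_type, Fintype.sum_bool,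
      effv, pvec, Pi.smul_apply, Pi.add_apply, smul_eq_mul] at key
    norm_num at key ⊢
    linear_combination key


end
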